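/- Let F be the free group on two generators X and Y, and work in the monoid algebra ℕ[F] (MonoidAlgebra ℕ (FreeGroup (Fin 2))), identifying each group element with the corresponding monomial. Define the group elements y₁ = Y² X⁻¹ Y⁻¹, y₂ = X⁻¹ Y⁻¹, y₃ = X Y⁻¹, r₀ = Y X Y⁻¹, and let T be the 4×4 matrix over ℕ[F] with entries T_{0,1} = T_{1,2} = T_{2,3} = 1, T_{1,0} = y₁, T_{2,1} = y₂, T_{3,2} = y₃, and all other entries 0. Then for every n ≥ 0, every coefficient of the element (T^{2n})_{0,0} · r₀ of ℕ[F] lies in {0, 1}; i.e., each Laurent monomial occurs at most once, corresponding to the weight of a single path on the segment [0,3]. -/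

import Mathlib

open Matrix

/-- The generator `X` of the free group on two generators. -/
def genX : FreeGroup (Fin 2) := FreeGroup.of 0

/-- The generator `Y` of the free group on two generators. -/
def genY : FreeGroup (Fin 2) := FreeGroup.of 1

/-- The monomial of `ℕ[F]` associated to a group element `g`. -/
noncomputable def mono (g : FreeGroup (Fin 2)) : MonoidAlgebra ℕ (FreeGroup (Fin 2)) :=
  MonoidAlgebra.of ℕ (FreeGroup (Fin 2)) g

/-- The transfer matrix of the `(2,2)` path model, with formal weights
`y₁ = Y² X⁻¹ Y⁻¹`, `y₂ = X⁻¹ Y⁻¹`, `y₃ = X Y⁻¹` in the monoid algebra `ℕ[F]`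
over the free group `F` on `X, Y`. -/
noncomputable def transferT :
    Matrix (Fin 4) (Fin 4) (MonoidAlgebra ℕ (FreeGroup (Fin 2))) :=
  !![0, 1, 0, 0;
     mono (genY ^ 2 * genX⁻¹ * genY⁻¹), 0, 1, 0;
     0, mono (genX⁻¹ * genY⁻¹), 0, 1;
     0, 0, mono (genX * genY⁻¹), 0]

namespace TwoTwoAux

abbrev Fr := FreeGroup (Fin 2)

/-- The three down-step weights (index 0 unused, set to 1). -/
def yw : Fin 4 → Fr :=
  ![1, genY ^ 2 * genX⁻¹ * genY⁻¹, genX⁻¹ * genY⁻¹, genX * genY⁻¹]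

/-- initial letter-blocks -/
def Aw : Fin 4 → List (Fin 2 × Bool) :=
  ![[(1, false)], [(1, true), (1, true), (0, false)], [(0, false)], [(0, true)]]

/-- subsequent letter-blocks -/
def Bw : Fin 4 → List (Fin 2 × Bool) :=
  ![[(1, true), (0, true)], [(1, true), (0, false)], [(1, false), (0, false)],
    [(1, false), (0, true)]]

/-- encoding of a down-sequence as a (reduced) word -/
def Ew : List (Fin 4) → List (Fin 2 × Bool)
  | [] => []
  | d :: t => Aw d ++ (t.flatMap Bw ++ [((1 : Fin 2), false)])

def prodY (l : List (Fin 4)) : Fr := (l.map yw).prod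

lemma mkA {d : Fin 4} (hd : d ≠ 0) : FreeGroup.mk (Aw d) = yw d * genY := by
  fin_cases d
  · exact absurd rfl hd
  all_goals decide

lemma mkB {d : Fin 4} (hd : d ≠ 0) : FreeGroup.mk (Bw d) = genY⁻¹ * (yw d * genY) := by
  fin_cases d
  · exact absurd rfl hd
  all_goals decide

lemma mkFB : ∀ t : List (Fin 4), (∀ x ∈ t, x ≠ 0) →
    FreeGroup.mk (t.flatMap Bw) = genY⁻¹ * prodY t * genY
  | [], _ => by simp [prodY, ← FreeGroup.one_eq_mk]
  | d :: t, h => by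
    have ih := mkFB t (fun x hx => h x (List.mem_cons_of_mem _ hx))
    rw [List.flatMap_cons, ← FreeGroup.mul_mk, ih, mkB (h d (List.mem_cons_self))]
    simp [prodY, mul_assoc]

lemma mkE : ∀ t : List (Fin 4), (∀ x ∈ t, x ≠ 0) → FreeGroup.mk (Ew t) = prodY t
  | [], _ => by simp [Ew, prodY, ← FreeGroup.one_eq_mk]
  | d :: t, h => by
    have ih := mkFB t (fun x hx => h x (List.mem_cons_of_mem _ hx))
    have h1 : FreeGroup.mk [((1 : Fin 2), false)] = genY⁻¹ := by decide
    rw [Ew, ← FreeGroup.mul_mk, ← FreeGroup.mul_mk, ih, h1,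
      mkA (h d (List.mem_cons_self))]
    simp [prodY, mul_assoc]

/-- the no-cancellation relation -/
def GP (a b : Fin 2 × Bool) : Prop := ¬(a.1 = b.1 ∧ a.2 = !b.2)

instance : DecidableRel GP := fun a b => inferInstanceAs (Decidable ¬(a.1 = b.1 ∧ a.2 = !b.2))

lemma reduce_chain : ∀ L : List (Fin 2 × Bool), List.Chain' GP L → FreeGroup.reduce L = L
  | [], _ => rfl
  | x :: L, h => by
    rw [FreeGroup.reduce.cons, reduce_chain L h.tail]
    cases L with
    | nil => rfl
    | cons y t =>
      have hxy : GP x y := (List.isChain_cons_cons.mp h).1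
      simp only [GP] at hxy
      simp [if_neg hxy]

lemma FB_head : ∀ t : List (Fin 4), ∃ b l',
    t.flatMap Bw ++ [((1 : Fin 2), false)] = ((1 : Fin 2), b) :: l'
  | [] => ⟨false, [], rfl⟩
  | d :: t => by
    fin_cases d <;> exact ⟨_, _, rfl⟩

lemma FB_chain : ∀ t : List (Fin 4),
    List.Chain' GP (t.flatMap Bw ++ [((1 : Fin 2), false)])
  | [] => by simp [List.Chain']
  | d :: t => by
    have ih := FB_chain t
    obtain ⟨b, l', hb⟩ := FB_head t
    rw [List.flatMap_cons, List.append_assoc, hb]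
    fin_cases d <;> simpa [Bw, GP, List.Chain', List.isChain_cons_cons] using (hb ▸ ih)

lemma E_chain : ∀ t : List (Fin 4), (∀ x ∈ t, x ≠ 0) → List.Chain' GP (Ew t)
  | [], _ => List.isChain_nil
  | d :: t, h => by
    have hd := h d (List.mem_cons_self)
    have ih := FB_chain t
    obtain ⟨b, l', hb⟩ := FB_head t
    rw [Ew, hb]
    fin_cases d
    · exact absurd rfl hd
    all_goals simpa [Aw, GP, List.Chain', List.isChain_cons_cons] using (hb ▸ ih)

lemma Bw_len (d : Fin 4) : (Bw d).length = 2 := by fin_cases d <;> rfl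

lemma Bw_inj : ∀ d d' : Fin 4, Bw d = Bw d' → d = d' := by decide

lemma flatMapB_inj : ∀ t t' : List (Fin 4), t.flatMap Bw = t'.flatMap Bw → t = t'
  | [], [], _ => rfl
  | [], d :: t', h => by
    exfalso; rw [List.flatMap_nil, List.flatMap_cons] at h
    fin_cases d <;> simp [Bw] at h
  | d :: t, [], h => by
    exfalso; rw [List.flatMap_nil, List.flatMap_cons] at h
    fin_cases d <;> simp [Bw] at h
  | d :: t, d' :: t', h => by
    rw [List.flatMap_cons, List.flatMap_cons] at h
    obtain ⟨h1, h2⟩ := List.append_inj h (by rw [Bw_len, Bw_len])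
    rw [Bw_inj _ _ h1, flatMapB_inj t t' h2]

lemma Ew_inj : ∀ t t' : List (Fin 4), (∀ x ∈ t, x ≠ 0) → (∀ x ∈ t', x ≠ 0) →
    Ew t = Ew t' → t = t'
  | [], [], _, _, _ => rfl
  | [], d :: t', _, _, h => by
    exfalso
    have : (Ew []).length = (Ew (d :: t')).length := by rw [h]
    simp [Ew] at this
  | d :: t, [], _, _, h => by
    exfalso
    have : (Ew (d :: t)).length = (Ew []).length := by rw [h]
    simp [Ew] at this
  | d :: t, d' :: t', ht, ht', h => by
    have hd := ht d (List.mem_cons_self)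
    have hd' := ht' d' (List.mem_cons_self)
    rw [Ew, Ew] at h
    have hdd : d = d' := by
      fin_cases d <;> fin_cases d' <;> simp_all [Aw]
    subst hdd
    have h2 : t.flatMap Bw ++ [((1 : Fin 2), false)]
        = t'.flatMap Bw ++ [((1 : Fin 2), false)] := List.append_cancel_left h
    have h3 : t.flatMap Bw = t'.flatMap Bw := List.append_cancel_right h2
    rw [flatMapB_inj t t' h3]

/-- injectivity of down-sequence ↦ group element, for sequences with entries in {1,2,3} -/
lemma prodY_inj {t t' : List (Fin 4)} (ht : ∀ x ∈ t, x ≠ 0) (ht' : ∀ x ∈ t', x ≠ 0)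
    (h : prodY t = prodY t') : t = t' := by
  apply Ew_inj t t' ht ht'
  have := congrArg FreeGroup.toWord ((mkE t ht).trans (h.trans (mkE t' ht').symm))
  rwa [FreeGroup.toWord_mk, FreeGroup.toWord_mk, reduce_chain _ (E_chain t ht),
    reduce_chain _ (E_chain t' ht')] at this

/-! ### Paths -/

def Valid : Fin 4 → List (Fin 4) → Prop
  | _, [] => True
  | i, k :: l => (k.val = i.val + 1 ∨ k.val + 1 = i.val) ∧ Valid k l

def downs : Fin 4 → List (Fin 4) → List (Fin 4)
  | _, [] => []
  | i, k :: l => if k.val + 1 = i.val then i :: downs k l else downs k l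

noncomputable def wt : Fin 4 → List (Fin 4) → MonoidAlgebra ℕ (FreeGroup (Fin 2))
  | _, [] => 1
  | i, k :: l => transferT i k * wt k l

lemma T_apply (i k : Fin 4) : transferT i k =
    if k.val = i.val + 1 then 1 else if k.val + 1 = i.val then mono (yw i) else 0 := by
  fin_cases i <;> fin_cases k <;> simp [transferT, yw, Matrix.vecHead, Matrix.vecTail]

lemma downs_ne_zero : ∀ (i : Fin 4) (l : List (Fin 4)), Valid i l →
    ∀ x ∈ downs i l, x ≠ 0
  | _, [], _ => by simp [downs]
  | i, k :: l, h => by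
    obtain ⟨hstep, hv⟩ := h
    intro x hx
    rw [downs] at hx
    split at hx
    · rcases List.mem_cons.mp hx with rfl | hx'
      · rename_i hdn
        intro h0; rw [h0] at hdn; simp at hdn
      · exact downs_ne_zero k l hv x hx'
    · exact downs_ne_zero k l hv x hx

lemma downs_head_ge : ∀ (i : Fin 4) (l : List (Fin 4)), Valid i l →
    ∀ x ∈ (downs i l).head?, i.val ≤ x.val
  | _, [], _ => by simp [downs]
  | i, k :: l, h => by
    obtain ⟨hstep, hv⟩ := h
    intro x hx
    rw [downs] at hx
    split at hx
    · simp only [List.head?_cons, Option.mem_def, Option.some.injEq] at hx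
      subst hx; exact le_refl _
    · rename_i hnd
      have hup : k.val = i.val + 1 := by rcases hstep with h' | h'; exact h'; exact absurd h' hnd
      have := downs_head_ge k l hv x hx
      omega

lemma path_inj : ∀ (l l' : List (Fin 4)) (i : Fin 4), Valid i l → Valid i l' →
    l.length = l'.length → downs i l = downs i l' → l = l'
  | [], [], _, _, _, _, _ => rfl
  | [], _ :: _, _, _, _, hlen, _ => by simp at hlen
  | _ :: _, [], _, _, _, hlen, _ => by simp at hlen
  | k :: l, k' :: l', i, hv, hv', hlen, hd => by
    obtain ⟨hs, hvl⟩ := hv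
    obtain ⟨hs', hvl'⟩ := hv'
    simp only [List.length_cons, Nat.succ.injEq] at hlen
    have hkk : k = k' := by
      rcases hs with h1 | h1 <;> rcases hs' with h2 | h2
      · exact Fin.ext (by omega)
      · exfalso
        rw [downs, downs, if_neg (by omega), if_pos h2] at hd
        have := downs_head_ge k l hvl i (by rw [hd]; simp)
        omega
      · exfalso
        rw [downs, downs, if_pos h1, if_neg (by omega)] at hd
        have := downs_head_ge k' l' hvl' i (by rw [← hd]; simp)
        omega
      · exact Fin.ext (by omega)
    subst hkk
    rw [downs, downs] at hd
    have hd2 : downs k l = downs k l' := by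
      split at hd
      · exact List.tail_eq_of_cons_eq hd
      · exact hd
    rw [path_inj l l' k hvl hvl' hlen hd2]

lemma wt_not_valid : ∀ (i : Fin 4) (l : List (Fin 4)), ¬ Valid i l → wt i l = 0
  | _, [], h => absurd trivial h
  | i, k :: l, h => by
    rw [wt]
    by_cases hs : k.val = i.val + 1 ∨ k.val + 1 = i.val
    · have : ¬ Valid k l := fun hv => h ⟨hs, hv⟩
      rw [wt_not_valid k l this, mul_zero]
    · rw [T_apply]
      push_neg at hs
      rw [if_neg hs.1, if_neg hs.2, zero_mul]

lemma mono_mul (a b : Fr) : mono a * mono b = mono (a * b) :=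
  (map_mul (MonoidAlgebra.of ℕ Fr) a b).symm

lemma wt_valid : ∀ (i : Fin 4) (l : List (Fin 4)), Valid i l →
    wt i l = mono (prodY (downs i l))
  | _, [], _ => by
    simp [wt, downs, prodY, mono, MonoidAlgebra.of_apply, MonoidAlgebra.one_def]
  | i, k :: l, h => by
    obtain ⟨hs, hv⟩ := h
    rw [wt, wt_valid k l hv, T_apply, downs]
    rcases hs with h1 | h1
    · rw [if_pos h1, if_neg (by omega), one_mul]
    · rw [if_neg (by omega), if_pos h1, if_pos h1, mono_mul]
      simp [prodY]

/-! ### matrix powers as sums over paths -/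

def paths : ℕ → Fin 4 → Fin 4 → Finset (List (Fin 4))
  | 0, i, j => if i = j then {[]} else ∅
  | m + 1, i, j => Finset.univ.biUnion fun k => (paths m k j).image (k :: ·)

lemma length_of_mem_paths : ∀ (m : ℕ) (i j : Fin 4) (l : List (Fin 4)),
    l ∈ paths m i j → l.length = m
  | 0, i, j, l, h => by
    rw [paths] at h
    split at h <;> simp_all
  | m + 1, i, j, l, h => by
    rw [paths] at h
    simp only [Finset.mem_biUnion, Finset.mem_image, Finset.mem_univ, true_and] at h
    obtain ⟨k, l', hl', rfl⟩ := h
    simp [length_of_mem_paths m k j l' hl']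

lemma pow_entry : ∀ (m : ℕ) (i j : Fin 4),
    (transferT ^ m) i j = ∑ l ∈ paths m i j, wt i l
  | 0, i, j => by
    rw [pow_zero, paths, Matrix.one_apply]
    split <;> simp [wt]
  | m + 1, i, j => by
    rw [pow_succ', Matrix.mul_apply, paths]
    rw [Finset.sum_biUnion]
    · refine Finset.sum_congr rfl fun k _ => ?_
      rw [Finset.sum_image (fun a _ b _ h => List.tail_eq_of_cons_eq h),
        pow_entry m k j, Finset.mul_sum]
      exact Finset.sum_congr rfl fun l _ => rfl
    · intro a _ b _ hab
      simp only [Finset.disjoint_left, Finset.mem_image]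
      rintro x ⟨l, _, rfl⟩ ⟨l', _, h⟩
      exact hab (List.head_eq_of_cons_eq h.symm)

lemma mono_apply (w g : Fr) : (mono w).coeff g = if w = g then 1 else 0 := by
  rw [mono, MonoidAlgebra.of_apply, MonoidAlgebra.single_apply]

lemma wt_coeff (i : Fin 4) (l : List (Fin 4)) (g : Fr) :
    (wt i l).coeff g = 0 ∨ ((wt i l).coeff g = 1 ∧ Valid i l ∧ prodY (downs i l) = g) := by
  by_cases hv : Valid i l
  · rw [wt_valid i l hv, mono_apply]
    by_cases hg : prodY (downs i l) = g
    · exact Or.inr ⟨by rw [if_pos hg], hv, hg⟩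
    · exact Or.inl (by rw [if_neg hg])
  · left; rw [wt_not_valid i l hv]; rfl

lemma entry_coeff_le (m : ℕ) (i j : Fin 4) (g : Fr) : ((transferT ^ m) i j).coeff g ≤ 1 := by
  rw [pow_entry, MonoidAlgebra.coeff_sum, Finset.sum_apply']
  by_cases hex : ∃ l₀ ∈ paths m i j, (wt i l₀).coeff g ≠ 0
  · obtain ⟨l₀, hl₀, hne⟩ := hex
    rcases wt_coeff i l₀ g with h0 | ⟨h1, hv, hp⟩
    · exact absurd h0 hne
    rw [Finset.sum_eq_single_of_mem l₀ hl₀]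
    · rw [h1]
    · intro l hl hne'
      rcases wt_coeff i l g with h0' | ⟨h1', hv', hp'⟩
      · exact h0'
      exfalso
      apply hne'
      apply path_inj l l₀ i hv' hv
      · rw [length_of_mem_paths m i j l hl, length_of_mem_paths m i j l₀ hl₀]
      · exact prodY_inj (downs_ne_zero i l hv') (downs_ne_zero i l₀ hv)
          (hp'.trans hp.symm)
  · push_neg at hex
    rw [Finset.sum_eq_zero hex]
    exact Nat.zero_le 1

end TwoTwoAux

/-- Every coefficient of `(T^{2n})_{0,0} · r₀`, with `r₀ = Y X Y⁻¹`, lies in `{0,1}`: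
each Laurent monomial occurs at most once, corresponding to the weight of a single
path on the segment `[0,3]`. -/
theorem twotwo_coefficients_zero_one :
    ∀ n : ℕ, ∀ g : FreeGroup (Fin 2),
      (((transferT ^ (2 * n)) 0 0 * mono (genY * genX * genY⁻¹)).coeff g : ℕ) ∈
        ({0, 1} : Set ℕ) := by
  intro n g
  have h : (((transferT ^ (2 * n)) 0 0 * mono (genY * genX * genY⁻¹)).coeff g : ℕ) ≤ 1 := by
    rw [mono, MonoidAlgebra.of_apply, MonoidAlgebra.mul_single_apply, mul_one]
    exact TwoTwoAux.entry_coeff_le (2 * n) 0 0 _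
  interval_cases h' : (((transferT ^ (2 * n)) 0 0 * mono (genY * genX * genY⁻¹)).coeff g : ℕ) <;> simp
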